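/- arXiv:2105.12352 — 4 statements merged into one kernel-verified Lean document; each statement's English description precedes it below -/
import Mathlib

section
/- For every positive integer x, Φ(x) = (1/2)·∑_{n=1}^{x} μ(n)·⌊x/n⌋² + 1/2, where Φ(x) = ∑_{n=1}^{x} φ(n). -/
open Finset ArithmeticFunction

lemma swap_sum (x : ℕ) (F : ℕ → ℕ → ℝ) :
    ∑ n ∈ Finset.Icc 1 x, ∑ p ∈ n.divisorsAntidiagonal, F p.1 p.2
      = ∑ d ∈ Finset.Icc 1 x, ∑ q ∈ Finset.Icc 1 (x / d), F d q := by
  rw [Finset.sum_sigma', Finset.sum_sigma']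
  refine Finset.sum_nbij' (fun p => ⟨p.2.1, p.2.2⟩) (fun p => ⟨p.1 * p.2, (p.1, p.2)⟩)
    ?_ ?_ ?_ ?_ ?_
  · rintro ⟨n, d, q⟩ h
    simp only [Finset.mem_sigma, Finset.mem_Icc, Nat.mem_divisorsAntidiagonal] at h ⊢
    obtain ⟨⟨hn1, hnx⟩, hdq, hn0⟩ := h
    subst hdq
    have hd : 0 < d := by
      rcases Nat.eq_zero_or_pos d with h | h
      · simp [h] at hn1
      · exact h
    have hq : 0 < q := by
      rcases Nat.eq_zero_or_pos q with h | h
      · simp [h] at hn1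
      · exact h
    refine ⟨⟨hd, le_trans (Nat.le_mul_of_pos_right d hq) hnx⟩, hq, ?_⟩
    rw [Nat.le_div_iff_mul_le hd]
    nlinarith
  · rintro ⟨d, q⟩ h
    simp only [Finset.mem_sigma, Finset.mem_Icc, Nat.mem_divisorsAntidiagonal] at h ⊢
    obtain ⟨⟨hd1, hdx⟩, hq1, hqx⟩ := h
    have := (Nat.le_div_iff_mul_le hd1).mp hqx
    refine ⟨⟨Nat.mul_pos hd1 hq1, by rwa [Nat.mul_comm] at this⟩, ?_⟩
    exact ⟨trivial, Nat.mul_ne_zero (by omega) (by omega)⟩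
  · rintro ⟨n, d, q⟩ h
    simp only [Finset.mem_sigma, Nat.mem_divisorsAntidiagonal] at h
    obtain ⟨_, hdq, _⟩ := h
    simp [hdq]
  · rintro ⟨d, q⟩ _
    rfl
  · rintro ⟨n, d, q⟩ _
    rfl

lemma gauss_icc (k : ℕ) : ∑ q ∈ Finset.Icc 1 k, (2 * (q : ℝ)) = (k : ℝ) * ((k : ℝ) + 1) := by
  induction k with
  | zero => simp
  | succ n ih =>
    rw [Finset.sum_Icc_succ_top (by omega), ih]
    push_cast
    ring

lemma phi_eq (m : ℕ) (hm : 0 < m) :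
    ∑ p ∈ m.divisorsAntidiagonal, (ArithmeticFunction.moebius p.1 : ℝ) * (p.2 : ℝ)
      = (Nat.totient m : ℝ) := by
  have key := (ArithmeticFunction.sum_eq_iff_sum_mul_moebius_eq
    (R := ℝ) (f := fun n => (Nat.totient n : ℝ)) (g := fun n => (n : ℝ))).mp ?_ m hm
  · exact key
  · intro n hn
    rw [← Nat.cast_sum]
    exact_mod_cast congrArg (Nat.cast : ℕ → ℝ) (Nat.sum_totient n)

lemma mu_sum (m : ℕ) (_hm : 0 < m) :
    ∑ p ∈ m.divisorsAntidiagonal, (ArithmeticFunction.moebius p.1 : ℝ)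
      = if m = 1 then 1 else 0 := by
  have h : ((ArithmeticFunction.moebius : ArithmeticFunction ℝ)
      * (ArithmeticFunction.zeta : ArithmeticFunction ℝ)) m
      = (1 : ArithmeticFunction ℝ) m := by
    rw [ArithmeticFunction.coe_moebius_mul_coe_zeta]
  rw [ArithmeticFunction.mul_apply, ArithmeticFunction.one_apply] at h
  rw [← h]
  refine Finset.sum_congr rfl fun p hp => ?_
  obtain ⟨heq, hne⟩ := Nat.mem_divisorsAntidiagonal.mp hp
  have hp2 : p.2 ≠ 0 := fun h0 => hne (by rw [← heq, h0, Nat.mul_zero])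
  simp [ArithmeticFunction.intCoe_apply, ArithmeticFunction.natCoe_apply,
    ArithmeticFunction.zeta_apply, hp2]

theorem stmt_5 (x : ℕ) (hx : 0 < x) :
    ((∑ n ∈ Finset.Icc 1 x, Nat.totient n : ℕ) : ℝ) =
      (1 / 2) * ∑ n ∈ Finset.Icc 1 x,
        (ArithmeticFunction.moebius n : ℝ) * ((x / n : ℕ) : ℝ) ^ 2 + 1 / 2 := by
  have hF1 : ∑ n ∈ Finset.Icc 1 x,
      (ArithmeticFunction.moebius n : ℝ) * ((x / n : ℕ) : ℝ) = 1 := by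
    have h1 : ∀ d : ℕ, (ArithmeticFunction.moebius d : ℝ) * ((x / d : ℕ) : ℝ)
        = ∑ _q ∈ Finset.Icc 1 (x / d), (ArithmeticFunction.moebius d : ℝ) := by
      intro d
      rw [Finset.sum_const, Nat.card_Icc]
      simp [mul_comm]
    rw [Finset.sum_congr rfl fun d _ => h1 d,
      ← swap_sum x (fun d _q => (ArithmeticFunction.moebius d : ℝ)),
      Finset.sum_congr rfl fun m hm => mu_sum m (Finset.mem_Icc.mp hm).1,
      Finset.sum_ite_eq' (Finset.Icc 1 x) 1 (fun _ => (1 : ℝ))]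
    simp [Nat.pos_iff_ne_zero.mp hx]
  have hF2 : ∑ n ∈ Finset.Icc 1 x, (ArithmeticFunction.moebius n : ℝ)
      * (((x / n : ℕ) : ℝ) * (((x / n : ℕ) : ℝ) + 1))
      = 2 * ∑ n ∈ Finset.Icc 1 x, (Nat.totient n : ℝ) := by
    have hGauss : ∀ d : ℕ, (ArithmeticFunction.moebius d : ℝ)
        * (((x / d : ℕ) : ℝ) * (((x / d : ℕ) : ℝ) + 1))
        = ∑ q ∈ Finset.Icc 1 (x / d), (ArithmeticFunction.moebius d : ℝ) * (2 * q) := by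
      intro d
      rw [← Finset.mul_sum, gauss_icc]
    rw [Finset.sum_congr rfl fun d _ => hGauss d,
      ← swap_sum x (fun d q => (ArithmeticFunction.moebius d : ℝ) * (2 * q)),
      Finset.mul_sum]
    refine Finset.sum_congr rfl fun m hm => ?_
    rw [← phi_eq m (Finset.mem_Icc.mp hm).1, Finset.mul_sum]
    exact Finset.sum_congr rfl fun p _ => by ring
  have hsum : ((∑ n ∈ Finset.Icc 1 x, Nat.totient n : ℕ) : ℝ)
      = ∑ n ∈ Finset.Icc 1 x, (Nat.totient n : ℝ) := by push_cast; rfl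
  have key : ∑ n ∈ Finset.Icc 1 x,
      (ArithmeticFunction.moebius n : ℝ) * ((x / n : ℕ) : ℝ) ^ 2
      = 2 * (∑ n ∈ Finset.Icc 1 x, (Nat.totient n : ℝ)) - 1 := by
    rw [show ∑ n ∈ Finset.Icc 1 x,
        (ArithmeticFunction.moebius n : ℝ) * ((x / n : ℕ) : ℝ) ^ 2
        = ∑ n ∈ Finset.Icc 1 x, ((ArithmeticFunction.moebius n : ℝ)
            * (((x / n : ℕ) : ℝ) * (((x / n : ℕ) : ℝ) + 1))
          - (ArithmeticFunction.moebius n : ℝ) * ((x / n : ℕ) : ℝ)) from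
        Finset.sum_congr rfl fun n _ => by ring,
      Finset.sum_sub_distrib, hF1, hF2]
  rw [hsum, key]
  ring
end

section
/- Let x > 1 and let f be a fraction in the Farey sequence of order x other than 1/1 (i.e., f = a/b in lowest terms with 0 ≤ a < b ≤ x). Then the number t of fractions in the Farey sequence of order x (including 0/1) that do not exceed f satisfies t = 1 + ∑_{j=2}^{x} M(⌊x/j⌋)·⌊j·f⌋. -/
open Finset ArithmeticFunction

/-- Mertens function `M(k) = ∑_{i=1}^{k} μ(i)`. -/
def Mertens (k : ℕ) : ℤ := ∑ i ∈ Finset.Icc 1 k, ArithmeticFunction.moebius i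

/-- Number of fractions `a/b` in the Farey sequence of order `x` (irreducible,
`1 ≤ a ≤ b ≤ x`, so excluding `0`) that are `≤ ξ`. -/
noncomputable def fareyCount (x : ℕ) (ξ : ℝ) : ℕ :=
  ((Finset.Icc 1 x ×ˢ Finset.Icc 1 x).filter
    (fun p => p.1 ≤ p.2 ∧ Nat.gcd p.1 p.2 = 1 ∧ (p.1 : ℝ) ≤ ξ * p.2)).card

/-- floor of `j * (a/b)` is natural division. -/
lemma aux_floor (a b j : ℕ) (hb : 0 < b) :
    ⌊(j : ℝ) * ((a : ℝ) / b)⌋ = ((a * j / b : ℕ) : ℤ) := by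
  have h1 : (j : ℝ) * ((a : ℝ) / b) = ((a * j : ℕ) : ℝ) / ((b : ℕ) : ℝ) := by
    push_cast; ring
  rw [h1, ← Int.natCast_floor_eq_floor (by positivity), Nat.floor_div_natCast, Nat.floor_natCast]

/-- counting `p` with `1 ≤ p` and `p*b ≤ a*q` in `Icc 1 y`. -/
lemma aux_colcard (a b q y : ℕ) (hb : 0 < b) (hle : a * q / b ≤ y) :
    ((Finset.Icc 1 y).filter (fun p => p * b ≤ a * q)).card = a * q / b := by
  have hcond : ∀ p : ℕ, (p * b ≤ a * q) ↔ p ≤ a * q / b := by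
    intro p
    rw [Nat.le_div_iff_mul_le hb]
  have : (Finset.Icc 1 y).filter (fun p => p * b ≤ a * q) = Finset.Icc 1 (a * q / b) := by
    ext p
    simp only [mem_filter, mem_Icc, hcond]
    omega
  rw [this, Nat.card_Icc]
  exact Nat.succ_sub_one _

/-- count of pairs with inequality (no coprimality) in a box. -/
lemma aux_boxcard (a b y : ℕ) (hb : 0 < b) (hab : a < b) :
    (((Finset.Icc 1 y ×ˢ Finset.Icc 1 y).filter (fun p => p.1 * b ≤ a * p.2)).card : ℤ)
      = ∑ q ∈ Finset.Icc 1 y, ((a * q / b : ℕ) : ℤ) := by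
  rw [← Finset.sum_boole, Finset.sum_product_right]
  rw [Finset.sum_congr rfl (fun q hq => ?_)]
  have hle : a * q / b ≤ y := by
    have h1 : a * q / b ≤ b * q / b := Nat.div_le_div_right (by
      exact Nat.mul_le_mul_right q hab.le)
    rw [Nat.mul_div_cancel_left q hb] at h1
    exact h1.trans (Finset.mem_Icc.mp hq).2
  rw [Finset.sum_boole, aux_colcard a b q y hb hle]

/-- scaling bijection. -/
lemma aux_scale (a b x d : ℕ) (hd : 0 < d) :
    ((Finset.Icc 1 x ×ˢ Finset.Icc 1 x).filter
        (fun p => p.1 * b ≤ a * p.2 ∧ d ∣ p.1 ∧ d ∣ p.2)).card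
      = ((Finset.Icc 1 (x / d) ×ˢ Finset.Icc 1 (x / d)).filter
        (fun p => p.1 * b ≤ a * p.2)).card := by
  apply Finset.card_nbij' (fun p => (p.1 / d, p.2 / d)) (fun p => (d * p.1, d * p.2))
  · rintro ⟨p, q⟩ hp
    simp only [Finset.mem_coe, mem_filter, mem_product, mem_Icc] at hp ⊢
    obtain ⟨⟨⟨hp1, hp2⟩, hq1, hq2⟩, hineq, ⟨e, he⟩, ⟨f, hf⟩⟩ := hp
    subst he hf
    rw [Nat.mul_div_cancel_left e hd, Nat.mul_div_cancel_left f hd]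
    have he1 : 0 < e := by
      rcases Nat.eq_zero_or_pos e with rfl | h
      · simp at hp1
      · exact h
    have hf1 : 0 < f := by
      rcases Nat.eq_zero_or_pos f with rfl | h
      · simp at hq1
      · exact h
    have he2 : e ≤ x / d := (Nat.le_div_iff_mul_le hd).mpr (by rwa [mul_comm])
    have hf2 : f ≤ x / d := (Nat.le_div_iff_mul_le hd).mpr (by rwa [mul_comm])
    have hkey : d * (e * b) ≤ d * (a * f) := by
      calc d * (e * b) = d * e * b := by ring
        _ ≤ a * (d * f) := hineq
        _ = d * (a * f) := by ring
    exact ⟨⟨⟨he1, he2⟩, hf1, hf2⟩, Nat.le_of_mul_le_mul_left hkey hd⟩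
  · rintro ⟨p, q⟩ hp
    simp only [Finset.mem_coe, mem_filter, mem_product, mem_Icc] at hp ⊢
    obtain ⟨⟨⟨hp1, hp2⟩, hq1, hq2⟩, hineq⟩ := hp
    have h1 : d * p ≤ x := by
      rw [mul_comm]; exact (Nat.le_div_iff_mul_le hd).mp hp2
    have h2 : d * q ≤ x := by
      rw [mul_comm]; exact (Nat.le_div_iff_mul_le hd).mp hq2
    have hkey : d * p * b ≤ a * (d * q) := by
      calc d * p * b = d * (p * b) := by ring
        _ ≤ d * (a * q) := Nat.mul_le_mul_left d hineq
        _ = a * (d * q) := by ring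
    exact ⟨⟨⟨Nat.mul_pos hd hp1, h1⟩, Nat.mul_pos hd hq1, h2⟩, hkey, ⟨p, rfl⟩, ⟨q, rfl⟩⟩
  · rintro ⟨p, q⟩ hp
    simp only [Finset.mem_coe, mem_filter, mem_product, mem_Icc] at hp
    obtain ⟨-, -, ⟨e, he⟩, ⟨f, hf⟩⟩ := hp
    subst he hf
    simp [Nat.mul_div_cancel_left _ hd]
  · rintro ⟨p, q⟩ hp
    simp [Nat.mul_div_cancel_left _ hd]

/-- the divisor-sum swap. -/
lemma aux_swap {M : Type*} [AddCommMonoid M] (x : ℕ) (f : ℕ → ℕ → M) :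
    ∑ d ∈ Finset.Icc 1 x, ∑ q ∈ Finset.Icc 1 (x / d), f d q
      = ∑ q ∈ Finset.Icc 1 x, ∑ d ∈ Finset.Icc 1 (x / q), f d q := by
  have key : ∀ d : ℕ, 0 < d →
      Finset.Icc 1 (x / d) = (Finset.Icc 1 x).filter (fun q => d * q ≤ x) := by
    intro d hd
    ext q
    simp only [mem_Icc, mem_filter]
    constructor
    · rintro ⟨h1, h2⟩
      have h3 := (Nat.le_div_iff_mul_le hd).mp h2
      have h4 : d * q ≤ x := by rwa [mul_comm] at h3
      have h5 : q ≤ d * q := Nat.le_mul_of_pos_left q hd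
      exact ⟨⟨h1, h5.trans h4⟩, h4⟩
    · rintro ⟨⟨h1, h2⟩, h3⟩
      exact ⟨h1, (Nat.le_div_iff_mul_le hd).mpr (by rwa [mul_comm] at h3)⟩
  calc ∑ d ∈ Finset.Icc 1 x, ∑ q ∈ Finset.Icc 1 (x / d), f d q
      = ∑ d ∈ Finset.Icc 1 x, ∑ q ∈ Finset.Icc 1 x, if d * q ≤ x then f d q else 0 := by
        refine Finset.sum_congr rfl fun d hd => ?_
        rw [key d (Finset.mem_Icc.mp hd).1, Finset.sum_filter]
    _ = ∑ q ∈ Finset.Icc 1 x, ∑ d ∈ Finset.Icc 1 x, if d * q ≤ x then f d q else 0 :=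
        Finset.sum_comm
    _ = ∑ q ∈ Finset.Icc 1 x, ∑ d ∈ Finset.Icc 1 (x / q), f d q := by
        refine Finset.sum_congr rfl fun q hq => ?_
        rw [key q (Finset.mem_Icc.mp hq).1, Finset.sum_filter]
        refine Finset.sum_congr rfl fun d hd => ?_
        rw [mul_comm]

/-- Möbius indicator. -/
lemma aux_moebius (n : ℕ) :
    ∑ d ∈ n.divisors, (ArithmeticFunction.moebius d : ℤ) = if n = 1 then 1 else 0 := by
  calc ∑ d ∈ n.divisors, (ArithmeticFunction.moebius d : ℤ)
      = (ArithmeticFunction.moebius * ArithmeticFunction.zeta : ArithmeticFunction ℤ) n :=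
        ArithmeticFunction.coe_mul_zeta_apply.symm
    _ = (1 : ArithmeticFunction ℤ) n := by rw [ArithmeticFunction.moebius_mul_coe_zeta]
    _ = if n = 1 then 1 else 0 := ArithmeticFunction.one_apply

/-- main identity over `Icc 1 x`. -/
lemma aux_main (x a b : ℕ) (hb : 0 < b) (hab : a < b) :
    (fareyCount x ((a : ℝ) / b) : ℤ)
      = ∑ j ∈ Finset.Icc 1 x, Mertens (x / j) * ((a * j / b : ℕ) : ℤ) := by
  -- step 1 : rewrite the filter condition in ℕ
  have step1 : fareyCount x ((a : ℝ) / b)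
      = ((Finset.Icc 1 x ×ˢ Finset.Icc 1 x).filter
          (fun p => p.1 * b ≤ a * p.2 ∧ Nat.gcd p.1 p.2 = 1)).card := by
    unfold fareyCount
    congr 1
    apply Finset.filter_congr
    rintro ⟨p, q⟩ hpq
    simp only [mem_product, mem_Icc] at hpq
    obtain ⟨⟨hp1, hp2⟩, hq1, hq2⟩ := hpq
    have hbR : (0 : ℝ) < b := by exact_mod_cast hb
    have hreal : ((p : ℝ) ≤ (a : ℝ) / b * q) ↔ p * b ≤ a * q := by
      rw [div_mul_eq_mul_div, le_div_iff₀ hbR]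
      exact_mod_cast Iff.rfl
    simp only [hreal]
    constructor
    · rintro ⟨-, h2, h3⟩; exact ⟨h3, h2⟩
    · rintro ⟨h1, h2⟩
      refine ⟨?_, h2, h1⟩
      have : p * b < q * b := by
        calc p * b ≤ a * q := h1
        _ < b * q := by
          have := (Nat.mul_lt_mul_right hq1).mpr hab
          linarith [this]
        _ = q * b := mul_comm b q
      exact le_of_lt (Nat.lt_of_mul_lt_mul_right this)
  rw [step1]
  set A := (Finset.Icc 1 x ×ˢ Finset.Icc 1 x).filter (fun p : ℕ × ℕ => p.1 * b ≤ a * p.2) with hA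
  -- step 2 : card as a sum of Möbius over divisors of gcd
  have step2 : (((Finset.Icc 1 x ×ˢ Finset.Icc 1 x).filter
      (fun p => p.1 * b ≤ a * p.2 ∧ Nat.gcd p.1 p.2 = 1)).card : ℤ)
      = ∑ p ∈ A, ∑ d ∈ Finset.Icc 1 x,
          if d ∣ p.1 ∧ d ∣ p.2 then (ArithmeticFunction.moebius d : ℤ) else 0 := by
    have hsplit : (Finset.Icc 1 x ×ˢ Finset.Icc 1 x).filter
        (fun p => p.1 * b ≤ a * p.2 ∧ Nat.gcd p.1 p.2 = 1)
        = A.filter (fun p => Nat.gcd p.1 p.2 = 1) := by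
      rw [hA, Finset.filter_filter]
    rw [hsplit, ← Finset.sum_boole]
    refine Finset.sum_congr rfl fun p hp => ?_
    have hp' := hp
    rw [hA, Finset.mem_filter, Finset.mem_product, Finset.mem_Icc, Finset.mem_Icc] at hp'
    obtain ⟨⟨⟨hp1, hp2⟩, hq1, hq2⟩, -⟩ := hp'
    have hdiv : (Nat.gcd p.1 p.2).divisors
        = (Finset.Icc 1 x).filter (fun d => d ∣ p.1 ∧ d ∣ p.2) := by
      ext d
      simp only [Nat.mem_divisors, mem_filter, mem_Icc, Nat.dvd_gcd_iff]
      constructor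
      · rintro ⟨⟨h1, h2⟩, -⟩
        refine ⟨⟨Nat.pos_of_dvd_of_pos h1 hp1, le_trans (Nat.le_of_dvd hp1 h1) hp2⟩, h1, h2⟩
      · rintro ⟨-, h1, h2⟩
        exact ⟨⟨h1, h2⟩, (Nat.gcd_pos_of_pos_left _ hp1).ne'⟩
    rw [← aux_moebius, hdiv, Finset.sum_filter]
  rw [step2]
  -- step 3 : swap sums, compute inner counts
  rw [Finset.sum_comm]
  have step3 : ∀ d ∈ Finset.Icc 1 x,
      (∑ p ∈ A, if d ∣ p.1 ∧ d ∣ p.2 then (ArithmeticFunction.moebius d : ℤ) else 0)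
        = (ArithmeticFunction.moebius d : ℤ) * ∑ q ∈ Finset.Icc 1 (x / d), ((a * q / b : ℕ) : ℤ) := by
    intro d hd
    have hd1 : 0 < d := (Finset.mem_Icc.mp hd).1
    rw [Finset.sum_ite, Finset.sum_const, Finset.sum_const_zero, add_zero,
      nsmul_eq_mul, mul_comm]
    congr 1
    have : A.filter (fun p => d ∣ p.1 ∧ d ∣ p.2)
        = (Finset.Icc 1 x ×ˢ Finset.Icc 1 x).filter
            (fun p => p.1 * b ≤ a * p.2 ∧ d ∣ p.1 ∧ d ∣ p.2) := by
      rw [hA, Finset.filter_filter]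
    rw [this, aux_scale a b x d hd1, ← aux_boxcard a b (x / d) hb hab]
  rw [Finset.sum_congr rfl step3]
  -- step 4 : final swap
  have := aux_swap x (fun d q => (ArithmeticFunction.moebius d : ℤ) * ((a * q / b : ℕ) : ℤ))
  simp only [Finset.mul_sum] at *
  rw [this]
  refine Finset.sum_congr rfl fun j hj => ?_
  rw [Mertens, Finset.sum_mul]

theorem stmt_11 (x a b : ℕ) (hx : 1 < x) (hb : 0 < b) (hbx : b ≤ x) (hab : a < b)
    (hgcd : Nat.gcd a b = 1) :
    -- `t` counts the Farey fractions of order `x` (including `0/1`) that are `≤ a/b`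
    ((1 + fareyCount x ((a : ℝ) / b) : ℕ) : ℤ) =
      1 + ∑ j ∈ Finset.Icc 2 x, Mertens (x / j) * ⌊(j : ℝ) * ((a : ℝ) / b)⌋ := by
  push_cast
  rw [aux_main x a b hb hab]
  congr 1
  have hins : Finset.Icc 1 x = insert 1 (Finset.Icc 2 x) := by
    ext j; simp [Finset.mem_Icc, Finset.mem_insert]; omega
  rw [hins, Finset.sum_insert (by simp)]
  have h1 : ((a * 1 / b : ℕ) : ℤ) = 0 := by
    rw [mul_one, Nat.div_eq_of_lt hab]; rfl
  rw [h1, mul_zero, zero_add]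
  exact Finset.sum_congr rfl fun j hj => by rw [aux_floor a b j hb]
end

section
/- For 0 ≤ ξ ≤ 1 and a positive integer x, the number h(ξ, x) of fractions in the Farey sequence of order x (excluding 0) that are ≤ ξ satisfies h(ξ, x) = ∑_{n=1}^{x} ⌊nξ⌋·M(⌊x/n⌋) = ∑_{n=1}^{x} μ(n)·∑_{d=1}^{⌊x/n⌋} ⌊dξ⌋. -/
open Finset ArithmeticFunction

lemma sum_div_moebius (m : ℕ) : ∑ i ∈ m.divisors, (moebius i : ℤ) = if m = 1 then 1 else 0 := by
  rw [← coe_mul_zeta_apply, moebius_mul_coe_zeta, one_apply]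

lemma sum_mult {M : Type*} [AddCommMonoid M] (x n : ℕ) (hn : 0 < n) (f : ℕ → M) :
    ∑ b ∈ (Finset.Icc 1 x).filter (n ∣ ·), f b = ∑ d ∈ Finset.Icc 1 (x/n), f (n*d) := by
  apply Finset.sum_nbij' (i := fun b => b / n) (j := fun d => n * d)
  · intro b hb
    simp only [mem_filter, mem_Icc] at hb ⊢
    obtain ⟨⟨h1, h2⟩, h3⟩ := hb
    exact ⟨Nat.one_le_div_iff hn |>.2 (Nat.le_of_dvd h1 h3), Nat.div_le_div_right h2⟩
  · intro d hd
    simp only [mem_filter, mem_Icc] at hd ⊢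
    refine ⟨⟨Nat.mul_pos hn (by omega), ?_⟩, ⟨d, rfl⟩⟩
    rw [mul_comm]
    exact (Nat.le_div_iff_mul_le hn).1 hd.2
  · intro b hb
    simp only [mem_filter] at hb
    exact Nat.mul_div_cancel' hb.2
  · intro d hd
    exact Nat.mul_div_cancel_left d hn
  · intro b hb
    simp only [mem_filter] at hb
    rw [Nat.mul_div_cancel' hb.2]

lemma floor_count (ξ : ℝ) (hξ0 : 0 ≤ ξ) (hξ1 : ξ ≤ 1) (y d : ℕ) (hd : d ≤ y) :
    ∑ a ∈ Finset.Icc 1 y, (if (a : ℝ) ≤ ξ * d then (1:ℤ) else 0) = ⌊(d : ℝ) * ξ⌋ := by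
  rw [← Finset.sum_filter]
  have h0 : (0:ℤ) ≤ ⌊(d:ℝ) * ξ⌋ := Int.floor_nonneg.2 (by positivity)
  have hle : ⌊(d:ℝ) * ξ⌋.toNat ≤ y := by
    have : ((d:ℝ) * ξ) ≤ d := by nlinarith [Nat.cast_nonneg (α := ℝ) d]
    have := Int.floor_le_floor (R := ℝ) this
    rw [Int.floor_natCast] at this
    omega
  have : (Finset.Icc 1 y).filter (fun a : ℕ => (a : ℝ) ≤ ξ * d) = Finset.Icc 1 ⌊(d:ℝ) * ξ⌋.toNat := by
    ext a
    simp only [mem_filter, mem_Icc]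
    constructor
    · rintro ⟨⟨h1, h2⟩, h3⟩
      refine ⟨h1, ?_⟩
      have : (a:ℤ) ≤ ⌊(d:ℝ)*ξ⌋ := Int.le_floor.2 (by rw [mul_comm] at h3 ; exact_mod_cast h3)
      omega
    · rintro ⟨h1, h2⟩
      have : (a:ℤ) ≤ ⌊(d:ℝ)*ξ⌋ := by omega
      have := (Int.le_floor).1 this
      refine ⟨⟨h1, le_trans h2 hle⟩, by rw [mul_comm] ; exact_mod_cast this⟩
  rw [this]
  simp only [Finset.sum_const, Nat.card_Icc, nsmul_eq_mul, mul_one]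
  omega

lemma swap_div (x : ℕ) (f : ℕ → ℕ → ℤ) :
    ∑ n ∈ Finset.Icc 1 x, ∑ d ∈ Finset.Icc 1 (x / n), f n d
      = ∑ d ∈ Finset.Icc 1 x, ∑ n ∈ Finset.Icc 1 (x / d), f n d := by
  have key : ∀ (g : ℕ → ℕ → ℤ), ∀ n ∈ Finset.Icc 1 x,
      ∑ d ∈ Finset.Icc 1 (x / n), g n d
        = ∑ d ∈ Finset.Icc 1 x, (if n * d ≤ x then g n d else 0) := by
    intro g n hn
    rw [mem_Icc] at hn
    rw [← Finset.sum_filter]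
    congr 1
    ext d
    simp only [mem_filter, mem_Icc]
    constructor
    · rintro ⟨h1, h2⟩
      have hmul : d * n ≤ x := (Nat.le_div_iff_mul_le (by omega)).1 h2
      have hmul' : n * d ≤ x := by rwa [mul_comm] at hmul
      exact ⟨⟨h1, le_trans (Nat.le_mul_of_pos_right d (by omega)) hmul⟩, hmul'⟩
    · rintro ⟨⟨h1, h2⟩, h3⟩
      exact ⟨h1, (Nat.le_div_iff_mul_le (by omega)).2 (by rwa [mul_comm])⟩
  rw [Finset.sum_congr rfl (key f), Finset.sum_congr rfl (key (fun d n => f n d)), Finset.sum_comm]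
  apply Finset.sum_congr rfl
  intro d _
  apply Finset.sum_congr rfl
  intro n _
  rw [mul_comm]

lemma fiber (x n : ℕ) (hn1 : 1 ≤ n) (ξ : ℝ) (hξ0 : 0 ≤ ξ) (hξ1 : ξ ≤ 1) :
    ∑ a ∈ Finset.Icc 1 x, ∑ b ∈ Finset.Icc 1 x,
      (if (n ∣ a ∧ n ∣ b ∧ (a:ℝ) ≤ ξ * b) then (1:ℤ) else 0)
    = ∑ d ∈ Finset.Icc 1 (x / n), ⌊(d:ℝ) * ξ⌋ := by
  rw [Finset.sum_comm]
  have step1 : ∀ b ∈ Finset.Icc 1 x,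
      (∑ a ∈ Finset.Icc 1 x, if (n ∣ a ∧ n ∣ b ∧ (a:ℝ) ≤ ξ * b) then (1:ℤ) else 0)
      = if n ∣ b then (∑ a ∈ Finset.Icc 1 x, if (n ∣ a ∧ (a:ℝ) ≤ ξ * b) then (1:ℤ) else 0)
        else 0 := by
    intro b _
    by_cases h : n ∣ b
    · simp only [h, if_true, true_and]
    · simp only [h, if_false, false_and, and_false]
      simp
  rw [Finset.sum_congr rfl step1, ← Finset.sum_filter,
    sum_mult x n (by omega) (fun b => ∑ a ∈ Finset.Icc 1 x,
      if (n ∣ a ∧ (a:ℝ) ≤ ξ * b) then (1:ℤ) else 0)]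
  apply Finset.sum_congr rfl
  intro d hd
  rw [Finset.mem_Icc] at hd
  have step2 : ∀ a ∈ Finset.Icc 1 x,
      (if (n ∣ a ∧ (a:ℝ) ≤ ξ * (n*d : ℕ)) then (1:ℤ) else 0)
      = if n ∣ a then (if (a:ℝ) ≤ ξ * (n*d : ℕ) then (1:ℤ) else 0) else 0 := by
    intro a _
    by_cases h : n ∣ a <;> simp [h]
  rw [Finset.sum_congr rfl step2, ← Finset.sum_filter,
    sum_mult x n (by omega) (fun a => if (a:ℝ) ≤ ξ * (n*d : ℕ) then (1:ℤ) else 0)]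
  have hcond : ∀ e : ℕ, (((n*e : ℕ) : ℝ) ≤ ξ * ((n*d : ℕ) : ℝ)) ↔ ((e:ℝ) ≤ ξ * d) := by
    intro e
    push_cast
    rw [show ξ * ((n:ℝ)*d) = (n:ℝ)*(ξ*d) by ring]
    exact mul_le_mul_iff_of_pos_left (by exact_mod_cast Nat.pos_of_ne_zero (by omega))
  calc ∑ e ∈ Finset.Icc 1 (x/n), (if ((n*e : ℕ) : ℝ) ≤ ξ * ((n*d : ℕ) : ℝ) then (1:ℤ) else 0)
      = ∑ e ∈ Finset.Icc 1 (x/n), (if (e : ℝ) ≤ ξ * d then (1:ℤ) else 0) := by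
        apply Finset.sum_congr rfl
        intro e _
        rw [if_congr (hcond e) rfl rfl]
    _ = ⌊(d:ℝ) * ξ⌋ := floor_count ξ hξ0 hξ1 (x/n) d hd.2

lemma point (x a b : ℕ) (ha : a ∈ Finset.Icc 1 x) (hb : b ∈ Finset.Icc 1 x)
    (ξ : ℝ) (hξ1 : ξ ≤ 1) :
    (if (a ≤ b ∧ Nat.gcd a b = 1 ∧ (a:ℝ) ≤ ξ * b) then (1:ℤ) else 0)
      = ∑ n ∈ Finset.Icc 1 x, if (n ∣ a ∧ n ∣ b ∧ (a:ℝ) ≤ ξ * b) then (moebius n : ℤ) else 0 := by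
  rw [Finset.mem_Icc] at ha hb
  by_cases hr : (a:ℝ) ≤ ξ * b
  · have hab : a ≤ b := by
      have : (a:ℝ) ≤ (b:ℝ) := le_trans hr (by nlinarith [Nat.cast_nonneg (α := ℝ) b])
      exact_mod_cast this
    simp only [hab, hr, and_true, true_and]
    have hset : (Finset.Icc 1 x).filter (fun n => n ∣ a ∧ n ∣ b) = (a.gcd b).divisors := by
      ext n
      simp only [Finset.mem_filter, Finset.mem_Icc, Nat.mem_divisors, Nat.dvd_gcd_iff]
      constructor
      · rintro ⟨_, h2⟩
        exact ⟨h2, Nat.gcd_ne_zero_left (by omega)⟩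
      · rintro ⟨⟨h1, h2⟩, _⟩
        exact ⟨⟨Nat.pos_of_dvd_of_pos h1 (by omega), le_trans (Nat.le_of_dvd (by omega) h1) ha.2⟩,
          h1, h2⟩
    rw [← Finset.sum_filter, hset, sum_div_moebius]
  · simp only [hr, and_false, if_false]
    rw [Finset.sum_eq_zero]
    intro n _
    simp [hr]

theorem main_second (x : ℕ) (hx : 0 < x) (ξ : ℝ) (hξ0 : 0 ≤ ξ) (hξ1 : ξ ≤ 1) :
    ((fareyCount x ξ : ℕ) : ℤ) =
        ∑ n ∈ Finset.Icc 1 x, (ArithmeticFunction.moebius n : ℤ) *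
          ∑ d ∈ Finset.Icc 1 (x / n), ⌊(d : ℝ) * ξ⌋ := by
  have hC : ((fareyCount x ξ : ℕ) : ℤ) = ∑ p ∈ Finset.Icc 1 x ×ˢ Finset.Icc 1 x,
      if (p.1 ≤ p.2 ∧ Nat.gcd p.1 p.2 = 1 ∧ (p.1 : ℝ) ≤ ξ * p.2) then (1:ℤ) else 0 := by
    rw [fareyCount, Finset.card_filter]
    push_cast
    rfl
  rw [hC, Finset.sum_product]
  calc ∑ a ∈ Finset.Icc 1 x, ∑ b ∈ Finset.Icc 1 x,
        (if (a ≤ b ∧ Nat.gcd a b = 1 ∧ (a:ℝ) ≤ ξ * b) then (1:ℤ) else 0)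
      = ∑ a ∈ Finset.Icc 1 x, ∑ b ∈ Finset.Icc 1 x, ∑ n ∈ Finset.Icc 1 x,
          (if (n ∣ a ∧ n ∣ b ∧ (a:ℝ) ≤ ξ * b) then (moebius n : ℤ) else 0) := by
        apply Finset.sum_congr rfl; intro a ha
        apply Finset.sum_congr rfl; intro b hb
        exact point x a b ha hb ξ hξ1
    _ = ∑ n ∈ Finset.Icc 1 x, ∑ a ∈ Finset.Icc 1 x, ∑ b ∈ Finset.Icc 1 x,
          (if (n ∣ a ∧ n ∣ b ∧ (a:ℝ) ≤ ξ * b) then (moebius n : ℤ) else 0) := by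
        rw [Finset.sum_congr rfl (fun a _ => Finset.sum_comm), Finset.sum_comm]
    _ = ∑ n ∈ Finset.Icc 1 x, (moebius n : ℤ) * ∑ d ∈ Finset.Icc 1 (x / n), ⌊(d : ℝ) * ξ⌋ := by
        apply Finset.sum_congr rfl
        intro n hn
        rw [Finset.mem_Icc] at hn
        rw [← fiber x n hn.1 ξ hξ0 hξ1, Finset.mul_sum]
        apply Finset.sum_congr rfl; intro a _
        rw [Finset.mul_sum]
        apply Finset.sum_congr rfl; intro b _
        split <;> ring

theorem stmt_12 (x : ℕ) (hx : 0 < x) (ξ : ℝ) (hξ0 : 0 ≤ ξ) (hξ1 : ξ ≤ 1) :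
    ((fareyCount x ξ : ℕ) : ℤ) =
        ∑ n ∈ Finset.Icc 1 x, ⌊(n : ℝ) * ξ⌋ * Mertens (x / n) ∧
    ((fareyCount x ξ : ℕ) : ℤ) =
        ∑ n ∈ Finset.Icc 1 x, (ArithmeticFunction.moebius n : ℤ) *
          ∑ d ∈ Finset.Icc 1 (x / n), ⌊(d : ℝ) * ξ⌋ := by
  have h2 := main_second x hx ξ hξ0 hξ1
  refine ⟨?_, h2⟩
  rw [h2]
  calc ∑ n ∈ Finset.Icc 1 x, (moebius n : ℤ) * ∑ d ∈ Finset.Icc 1 (x / n), ⌊(d : ℝ) * ξ⌋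
      = ∑ n ∈ Finset.Icc 1 x, ∑ d ∈ Finset.Icc 1 (x / n), (moebius n : ℤ) * ⌊(d : ℝ) * ξ⌋ := by
        simp_rw [Finset.mul_sum]
    _ = ∑ d ∈ Finset.Icc 1 x, ∑ n ∈ Finset.Icc 1 (x / d), (moebius n : ℤ) * ⌊(d : ℝ) * ξ⌋ :=
        swap_div x _
    _ = ∑ d ∈ Finset.Icc 1 x, ⌊(d : ℝ) * ξ⌋ * Mertens (x / d) := by
        apply Finset.sum_congr rfl
        intro d _
        rw [Mertens, Finset.mul_sum]
        apply Finset.sum_congr rfl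
        intros; ring
end

section
/- The determinant of the x × x Redheffer matrix R, where R(i,j) = 1 if i divides j or j = 1 and R(i,j) = 0 otherwise, equals the Mertens function M(x) = ∑_{n=1}^{x} μ(n). -/
open Finset ArithmeticFunction

/-- Sum of Möbius over divisors. -/
lemma aux_sum_moebius_divisors (n : ℕ) :
    ∑ d ∈ n.divisors, (moebius d : ℤ) = if n = 1 then 1 else 0 := by
  have h := congrArg (fun f : ArithmeticFunction ℤ => f n) moebius_mul_coe_zeta
  simp only [coe_mul_zeta_apply, one_apply] at h
  exact h

/-- Möbius-inversion vector for the first column. -/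
def ttv (x n : ℕ) : ℤ := ∑ m ∈ Finset.Icc 1 x, if n ∣ m then (moebius (m / n) : ℤ) else 0

lemma aux_inner (x i m : ℕ) (hi : i ∈ Finset.Icc 1 x) (hm : m ∈ Finset.Icc 1 x) :
    ∑ k ∈ Finset.Icc 1 x, (if i ∣ k ∧ k ∣ m then (moebius (m / k) : ℤ) else 0)
      = if m = i then 1 else 0 := by
  simp only [mem_Icc] at hi hm
  have hm0 : m ≠ 0 := by omega
  have hi0 : 0 < i := hi.1
  have hsub : m.divisors ⊆ Finset.Icc 1 x := by
    intro k hk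
    rw [Nat.mem_divisors] at hk
    have h1 := Nat.pos_of_dvd_of_pos hk.1 (by omega)
    have h2 := Nat.le_of_dvd (by omega) hk.1
    simp only [mem_Icc]; omega
  rw [← Finset.sum_subset hsub]
  · -- sum over divisors of m
    have hdiv : ∀ k ∈ m.divisors,
        (if i ∣ k ∧ k ∣ m then (moebius (m / k) : ℤ) else 0)
          = if i ∣ k then (moebius (m / k) : ℤ) else 0 := by
      intro k hk
      rw [Nat.mem_divisors] at hk
      simp [hk.1]
    rw [Finset.sum_congr rfl hdiv]
    by_cases him : i ∣ m
    · have := Nat.sum_div_divisors m (fun k => if i ∣ k then (moebius (m / k) : ℤ) else 0)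
      rw [← this]
      have hcong : ∀ d ∈ m.divisors,
          (if i ∣ m / d then (moebius (m / (m / d)) : ℤ) else 0)
            = if d ∣ m / i then (moebius d : ℤ) else 0 := by
        intro d hd
        rw [Nat.mem_divisors] at hd
        have h1 : m / (m / d) = d := Nat.div_div_self hd.1 hm0
        have h2 : (i ∣ m / d) ↔ (d ∣ m / i) := by
          rw [Nat.dvd_div_iff_mul_dvd hd.1, Nat.dvd_div_iff_mul_dvd him, mul_comm]
        rw [h1]
        by_cases h : d ∣ m / i
        · rw [if_pos (h2.mpr h), if_pos h]
        · rw [if_neg (fun hh => h (h2.mp hh)), if_neg h]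
      rw [Finset.sum_congr rfl hcong]
      have hsub2 : (m / i).divisors ⊆ m.divisors :=
        Nat.divisors_subset_of_dvd hm0 (Nat.div_dvd_of_dvd him)
      have hd0 : m / i ≠ 0 := by
        have := Nat.div_pos (Nat.le_of_dvd (by omega) him) hi0
        omega
      rw [← Finset.sum_subset hsub2]
      · have hx1 : ∀ d ∈ (m / i).divisors,
            (if d ∣ m / i then (moebius d : ℤ) else 0) = (moebius d : ℤ) := by
          intro d hd
          rw [Nat.mem_divisors] at hd
          simp [hd.1]
        rw [Finset.sum_congr rfl hx1, aux_sum_moebius_divisors]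
        have : m / i = 1 ↔ m = i := by
          constructor
          · intro h
            have := Nat.div_mul_cancel him
            rw [h, one_mul] at this; omega
          · intro h; rw [h]; exact Nat.div_self hi0
        by_cases h : m = i
        · rw [if_pos (this.mpr h), if_pos h]
        · rw [if_neg (fun hh => h (this.mp hh)), if_neg h]
      · intro d _ hd
        rw [if_neg]
        intro hdvd
        exact hd (Nat.mem_divisors.mpr ⟨hdvd, hd0⟩)
    · -- i does not divide m
      have : ∀ k ∈ m.divisors, (if i ∣ k then (moebius (m / k) : ℤ) else 0) = 0 := by
        intro k hk
        rw [Nat.mem_divisors] at hk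
        rw [if_neg]
        intro hik
        exact him (hik.trans hk.1)
      rw [Finset.sum_congr rfl this, Finset.sum_const, smul_zero]
      rw [if_neg]
      rintro rfl
      exact him dvd_rfl
  · intro k _ hk
    rw [if_neg]
    rintro ⟨-, hkm⟩
    exact hk (Nat.mem_divisors.mpr ⟨hkm, hm0⟩)

lemma aux_key (x i : ℕ) (hi : i ∈ Finset.Icc 1 x) :
    ∑ k ∈ Finset.Icc 1 x, (if i ∣ k then ttv x k else 0) = 1 := by
  have step : ∀ k ∈ Finset.Icc 1 x, (if i ∣ k then ttv x k else 0)
      = ∑ m ∈ Finset.Icc 1 x, (if i ∣ k ∧ k ∣ m then (moebius (m / k) : ℤ) else 0) := by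
    intro k _
    unfold ttv
    by_cases h : i ∣ k
    · rw [if_pos h]
      refine Finset.sum_congr rfl fun m _ => ?_
      by_cases h2 : k ∣ m
      · rw [if_pos h2, if_pos ⟨h, h2⟩]
      · rw [if_neg h2, if_neg (fun hh => h2 hh.2)]
    · rw [if_neg h, eq_comm]
      refine Finset.sum_eq_zero fun m _ => ?_
      rw [if_neg (fun hh => h hh.1)]
  rw [Finset.sum_congr rfl step, Finset.sum_comm]
  have step2 : ∀ m ∈ Finset.Icc 1 x,
      ∑ k ∈ Finset.Icc 1 x, (if i ∣ k ∧ k ∣ m then (moebius (m / k) : ℤ) else 0)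
        = if m = i then 1 else 0 := fun m hm => aux_inner x i m hi hm
  rw [Finset.sum_congr rfl step2, Finset.sum_ite_eq' _ i, if_pos hi]

theorem stmt_16 (x : ℕ) (hx : 0 < x) :
    Matrix.det (fun i j : Fin x =>
        if (i.val + 1) ∣ (j.val + 1) ∨ j.val + 1 = 1 then (1 : ℤ) else 0) =
      Mertens x := by
  set U : Matrix (Fin x) (Fin x) ℤ :=
    Matrix.of fun i j => if (i.val + 1) ∣ (j.val + 1) then 1 else 0 with hU
  set T : Matrix (Fin x) (Fin x) ℤ :=
    Matrix.of fun i j => if j.val = 0 then ttv x (i.val + 1) else if i = j then 1 else 0 with hT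
  have hfac : (fun i j : Fin x =>
      if (i.val + 1) ∣ (j.val + 1) ∨ j.val + 1 = 1 then (1 : ℤ) else 0) = U * T := by
    funext i j
    rw [Matrix.mul_apply]
    by_cases hj : j.val = 0
    · -- first column
      have hR : (if (i.val + 1) ∣ (j.val + 1) ∨ j.val + 1 = 1 then (1 : ℤ) else 0) = 1 := by
        rw [if_pos (Or.inr (by omega))]
      rw [hR]
      have hTk : ∀ k : Fin x, U i k * T k j
          = if (i.val + 1) ∣ (k.val + 1) then ttv x (k.val + 1) else 0 := by
        intro k
        simp only [hU, hT, Matrix.of_apply, if_pos hj]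
        by_cases h : (i.val + 1) ∣ (k.val + 1)
        · rw [if_pos h, if_pos h, one_mul]
        · rw [if_neg h, if_neg h, zero_mul]
      rw [Finset.sum_congr rfl (fun k _ => hTk k)]
      have := aux_key x (i.val + 1) (by simp only [mem_Icc]; omega)
      rw [← this]
      rw [← Finset.Ico_add_one_right_eq_Icc, Finset.sum_Ico_eq_sum_range,
        show x + 1 - 1 = x from rfl]
      rw [← Fin.sum_univ_eq_sum_range
        (fun n => if (i.val + 1) ∣ (1 + n) then ttv x (1 + n) else 0) x]
      refine Finset.sum_congr rfl fun k _ => ?_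
      rw [Nat.add_comm 1 k.val]
    · -- other columns
      have hTk : ∀ k : Fin x, U i k * T k j = if k = j then U i j else 0 := by
        intro k
        simp only [hU, hT, Matrix.of_apply, if_neg hj]
        by_cases h : k = j
        · subst h; rw [if_pos rfl, if_pos rfl, mul_one]
        · rw [if_neg h, if_neg h, mul_zero]
      rw [Finset.sum_congr rfl (fun k _ => hTk k), Finset.sum_ite_eq' _ j, if_pos (mem_univ j)]
      simp only [hU, Matrix.of_apply]
      have : j.val + 1 ≠ 1 := by omega
      by_cases h : (i.val + 1) ∣ (j.val + 1)
      · rw [if_pos h, if_pos (Or.inl h)]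
      · rw [if_neg h, if_neg (by tauto)]
  rw [hfac, Matrix.det_mul]
  have hdetU : U.det = 1 := by
    rw [Matrix.det_of_upperTriangular]
    · refine Finset.prod_eq_one fun i _ => ?_
      simp [hU]
    · intro i j hij
      have hij' : (j : Fin x) < i := hij
      simp only [hU, Matrix.of_apply]
      rw [if_neg]
      intro h
      have h2 := Nat.le_of_dvd (by omega) h
      have h3 : (j : ℕ) < i := hij'
      omega
  have hdetT : T.det = Mertens x := by
    rw [Matrix.det_of_lowerTriangular]
    · have h0 : (⟨0, hx⟩ : Fin x) ∈ Finset.univ := mem_univ _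
      rw [Finset.prod_eq_single (⟨0, hx⟩ : Fin x)]
      · have : ttv x 1 = Mertens x := by
          unfold ttv Mertens
          refine Finset.sum_congr rfl fun m _ => ?_
          simp
        simp only [hT, Matrix.of_apply]
        simpa using this
      · intro i _ hi
        have : i.val ≠ 0 := fun h => hi (Fin.ext h)
        simp only [hT, Matrix.of_apply, if_neg this]
        simp
      · intro h; exact absurd h0 h
    · intro i j hij
      have hij' : i < j := hij
      have : j.val ≠ 0 := by
        have := hij'
        simp only [Fin.lt_def] at this
        omega
      simp only [hT, Matrix.of_apply, if_neg this]
      rw [if_neg (Fin.ne_of_lt hij')]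
  rw [hdetU, hdetT, one_mul]
end
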